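/- Let X be a finite set, Θ a set, P : Θ → X → ℝ a family of probability mass functions. Suppose λ : ℝ → ℝ is differentiable and strictly convex, and T : X → ℝ satisfies: for every S with E_θ S = E_θ T for all θ, E_θ (λ ∘ T) ≤ E_θ (λ ∘ S) for all θ (T is λ-UBUE). Then for every H with E_θ H = 0 for all θ, one has E_θ ((λ' ∘ T) · H) = 0 for all θ. -/

import Mathlib

/-- First-order optimality condition for a `λ`-UBUE: if `λ` is differentiable and
strictly convex and `T` is best unbiased for the loss `λ`, then
`E_θ ((λ' ∘ T) · H) = 0` for every unbiased estimator `H` of zero and every `θ`. -/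
theorem lubue_first_order
    {X Θ : Type*} [Fintype X]
    (P : Θ → X → ℝ)
    (hP0 : ∀ θ x, 0 ≤ P θ x)
    (hP1 : ∀ θ, ∑ x, P θ x = 1)
    (l : ℝ → ℝ) (hdiff : Differentiable ℝ l) (hconv : StrictConvexOn ℝ Set.univ l)
    (T : X → ℝ)
    (hT : ∀ S : X → ℝ, (∀ θ, ∑ x, S x * P θ x = ∑ x, T x * P θ x) →
        ∀ θ, ∑ x, l (T x) * P θ x ≤ ∑ x, l (S x) * P θ x) :
    ∀ H : X → ℝ, (∀ θ, ∑ x, H x * P θ x = 0) →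
      ∀ θ, ∑ x, deriv l (T x) * H x * P θ x = 0 := by
  intro H hH θ
  set f : ℝ → ℝ := fun ε => ∑ x, l (T x + ε * H x) * P θ x with hf
  have hderiv : HasDerivAt f (∑ x, deriv l (T x) * H x * P θ x) 0 := by
    have : HasDerivAt f (∑ x, deriv l (T x + 0 * H x) * H x * P θ x) 0 := by
      apply HasDerivAt.fun_sum
      intro x _
      have h1 : HasDerivAt (fun ε : ℝ => T x + ε * H x) (H x) 0 := by
        simpa [mul_comm] using ((hasDerivAt_id (0:ℝ)).const_mul (H x)).const_add (T x)
      have h2 := ((hdiff (T x + 0 * H x)).hasDerivAt.comp 0 h1)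
      simpa [mul_comm, mul_assoc, mul_left_comm] using h2.mul_const (P θ x)
    simpa using this
  have hmin : ∀ ε : ℝ, f 0 ≤ f ε := by
    intro ε
    have hunb : ∀ θ', ∑ x, (T x + ε * H x) * P θ' x = ∑ x, T x * P θ' x := by
      intro θ'
      have := hH θ'
      simp only [add_mul, Finset.sum_add_distrib, mul_assoc]
      rw [← Finset.mul_sum, this, mul_zero, add_zero]
    have := hT (fun x => T x + ε * H x) hunb θ
    simpa [hf] using this
  have hloc : IsLocalMin f 0 := by
    apply Filter.Eventually.of_forall
    intro ε
    exact hmin ε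
  have := hloc.hasDerivAt_eq_zero hderiv
  exact this
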